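/- Fix integers v ≥ 1 and block sizes p₀, p₁, …, p_v ≥ 1 with p = p₀ + p₁ + ⋯ + p_v, partitioning the coordinates of ℝ^p into consecutive blocks of sizes p₁, …, p_v, p₀ (the last block, indexed 0, is the noise block). Fix a finite nonempty set 𝒯 of lags and real numbers λ_{τj} for τ ∈ 𝒯, j = 0, 1, …, v, with λ_{τ0} = 0 for all τ ∈ 𝒯, and let D_τ = diag(λ_{τ1}I_{p₁}, …, λ_{τv}I_{p_v}, λ_{τ0}I_{p₀}) ∈ ℝ^{p×p}. Assume (i) for every k = 1, …, v there exists τ ∈ 𝒯 with λ_{τk} ≠ 0, and (ii) for all distinct j, k ∈ {1, …, v} there exists τ ∈ 𝒯 with λ_{τj} ≠ λ_{τk}. Then an orthogonal matrix W ∈ ℝ^{p×p} maximizes g over the set of all orthogonal p×p matrices if and only if there exists a permutation matrix P ∈ ℝ^{p×p} such that WP is block diagonal with diagonal blocks of sizes p₁, …, p_v, p₀ conforming to the partition (in which case each diagonal block is itself an orthogonal matrix). -/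

import Mathlib

open MeasureTheory Filter Matrix Finset
open scoped Topology ENNReal NNReal Kronecker

noncomputable section

/-- Squared Frobenius norm of a real matrix. -/
def frobSq {ι κ : Type*} [Fintype ι] [Fintype κ] (M : Matrix ι κ ℝ) : ℝ :=
  ∑ i, ∑ j, (M i j) ^ 2

/-- Frobenius norm of a real matrix. -/
def frobNorm {ι κ : Type*} [Fintype ι] [Fintype κ] (M : Matrix ι κ ℝ) : ℝ :=
  Real.sqrt (frobSq M)

/-- Euclidean norm of a vector. -/
def euclNorm {ι : Type*} [Fintype ι] (x : ι → ℝ) : ℝ :=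
  Real.sqrt (∑ i, (x i) ^ 2)

/-- `X_T = O_p(1)` (boundedness in probability), matrix version, Frobenius norm. -/
def MatIsOp {Ω ι κ : Type*} [MeasurableSpace Ω] [Fintype ι] [Fintype κ]
    (μ : Measure Ω) (X : ℕ → Ω → Matrix ι κ ℝ) : Prop :=
  ∀ ε : ℝ, 0 < ε → ∃ M : ℝ, 0 < M ∧ ∀ T, μ {ω | M < frobNorm (X T ω)} ≤ ENNReal.ofReal ε

/-- `X_T = O_p(1)` (boundedness in probability), vector version, Euclidean norm. -/
def VecIsOp {Ω ι : Type*} [MeasurableSpace Ω] [Fintype ι]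
    (μ : Measure Ω) (X : ℕ → Ω → ι → ℝ) : Prop :=
  ∀ ε : ℝ, 0 < ε → ∃ M : ℝ, 0 < M ∧ ∀ T, μ {ω | M < euclNorm (X T ω)} ≤ ENNReal.ofReal ε

/-- Convergence to zero in probability, matrix version (Frobenius norm). -/
def MatTendstoP0 {Ω ι κ : Type*} [MeasurableSpace Ω] [Fintype ι] [Fintype κ]
    (μ : Measure Ω) (X : ℕ → Ω → Matrix ι κ ℝ) : Prop :=
  ∀ ε : ℝ, 0 < ε → Tendsto (fun T => μ {ω | ε < frobNorm (X T ω)}) atTop (𝓝 0)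

/-- Convergence to zero in probability, real-valued version. -/
def RealTendstoP0 {Ω : Type*} [MeasurableSpace Ω]
    (μ : Measure Ω) (X : ℕ → Ω → ℝ) : Prop :=
  ∀ ε : ℝ, 0 < ε → Tendsto (fun T => μ {ω | ε < |X T ω|}) atTop (𝓝 0)

/-- Convergence in distribution: weak convergence of the laws to the measure `ν`. -/
def TendstoInDist {Ω E : Type*} [MeasurableSpace Ω] [MeasurableSpace E] [TopologicalSpace E]
    (μ : Measure Ω) (X : ℕ → Ω → E) (ν : Measure E) : Prop :=
  ∀ f : BoundedContinuousFunction E ℝ,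
    Tendsto (fun T => ∫ ω, f (X T ω) ∂μ) atTop (𝓝 (∫ x, f x ∂ν))

open Classical in
/-- The centered (possibly degenerate) Gaussian distribution `N(0, V)` on `ι → ℝ`,
realized as the law of `V^{1/2} z` with `z` standard Gaussian. -/
def gaussianOfCov {ι : Type*} [Fintype ι] [DecidableEq ι] (V : Matrix ι ι ℝ) :
    Measure (ι → ℝ) :=
  if h : V.PosSemidef then
    Measure.map (fun z => ((h.1.eigenvectorUnitary : Matrix ι ι ℝ) *
        diagonal ((↑) ∘ (√·) ∘ h.1.eigenvalues : ι → ℝ) *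
        (star h.1.eigenvectorUnitary : Matrix ι ι ℝ)).mulVec z)
      (Measure.pi fun _ : ι => ProbabilityTheory.gaussianReal 0 1)
  else 0

/-- Chi-squared distribution with `k` degrees of freedom: Gamma, shape `k/2`, rate `1/2`. -/
def chiSq (k : ℝ) : Measure ℝ := ProbabilityTheory.gammaMeasure (k / 2) (1 / 2)

open Classical in
/-- Inverse of the unique symmetric positive definite square root of `S`
(junk value `0` if `S` is not positive definite). -/
def invSqrt {ι : Type*} [Fintype ι] [DecidableEq ι] (S : Matrix ι ι ℝ) : Matrix ι ι ℝ :=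
  if h : S.PosDef then ((h.posSemidef.1.eigenvectorUnitary : Matrix ι ι ℝ) *
    diagonal ((↑) ∘ (√·) ∘ h.posSemidef.1.eigenvalues : ι → ℝ) *
    (star h.posSemidef.1.eigenvectorUnitary : Matrix ι ι ℝ))⁻¹ else 0

/-- Column-vectorization of an `r × r` matrix, indexed by (column, row) pairs. -/
def vecM {r : ℕ} (M : Matrix (Fin r) (Fin r) ℝ) : Fin r × Fin r → ℝ :=
  fun q => M q.2 q.1

/-- The commutation matrix `K_rr = ∑ i j, E_r^{ij} ⊗ E_r^{ji}`. -/
def commMatrix (r : ℕ) : Matrix (Fin r × Fin r) (Fin r × Fin r) ℝ :=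
  ∑ i : Fin r, ∑ j : Fin r, single i j (1 : ℝ) ⊗ₖ single j i (1 : ℝ)

/-- The matrix `D_rr = ∑ i, E_r^{ii} ⊗ E_r^{ii}`. -/
def dblDiagMatrix (r : ℕ) : Matrix (Fin r × Fin r) (Fin r × Fin r) ℝ :=
  ∑ i : Fin r, single i i (1 : ℝ) ⊗ₖ single i i (1 : ℝ)

/-- The all-ones matrix `J_r`. -/
def onesMat (r : ℕ) : Matrix (Fin r) (Fin r) ℝ := Matrix.of fun _ _ => 1


/-- Index set for `ℝ^p` partitioned into blocks of sizes `s 0, …, s v`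
(the block `Fin.last v` is the noise block, placed last). -/
abbrev BlkIdx (v : ℕ) (s : Fin (v + 1) → ℕ) : Type := (j : Fin (v + 1)) × Fin (s j)

/-- The `(i, j)` block of a matrix, relative to the block partition. -/
def blk {v : ℕ} {s : Fin (v + 1) → ℕ} (U : Matrix (BlkIdx v s) (BlkIdx v s) ℝ)
    (i j : Fin (v + 1)) : Matrix (Fin (s i)) (Fin (s j)) ℝ :=
  Matrix.of fun a b => U ⟨i, a⟩ ⟨j, b⟩

/-- The diagonal matrix `D_τ = diag(λ_{τ1} I_{p₁}, …, λ_{τv} I_{p_v}, λ_{τ0} I_{p₀})`. -/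
def Dmat {v : ℕ} (s : Fin (v + 1) → ℕ) {ι : Type*} (lam : ι → Fin (v + 1) → ℝ) (τ : ι) :
    Matrix (BlkIdx v s) (BlkIdx v s) ℝ :=
  Matrix.diagonal fun i => lam τ i.1

/-- The SOBI objective `g(U) = ∑_τ ‖diag(Uᵀ D_τ U)‖²`. -/
def gObj {v : ℕ} (s : Fin (v + 1) → ℕ) {ι : Type*} [Fintype ι] (lam : ι → Fin (v + 1) → ℝ)
    (U : Matrix (BlkIdx v s) (BlkIdx v s) ℝ) : ℝ :=
  ∑ τ : ι, ∑ i : BlkIdx v s, ((Uᵀ * Dmat s lam τ * U) i i) ^ 2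

/-- The value `∑_{τ∈𝒯} ∑_{j=1}^{v} λ_{τj}² p_j`. -/
def gMax {v : ℕ} (s : Fin (v + 1) → ℕ) {ι : Type*} [Fintype ι]
    (lam : ι → Fin (v + 1) → ℝ) : ℝ :=
  ∑ τ : ι, ∑ j ∈ Finset.univ.erase (Fin.last v), (lam τ j) ^ 2 * (s j : ℝ)

section Helpers

variable {v : ℕ} {s : Fin (v + 1) → ℕ} {ι : Type*} [Fintype ι]
  (lam : ι → Fin (v + 1) → ℝ)

/-- block mass of column i in block j -/
def mcoef (U : Matrix (BlkIdx v s) (BlkIdx v s) ℝ) (i : BlkIdx v s) (j : Fin (v + 1)) : ℝ :=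
  ∑ a : Fin (s j), (U ⟨j, a⟩ i) ^ 2

lemma sigma_sum (f : BlkIdx v s → ℝ) : ∑ k : BlkIdx v s, f k = ∑ j, ∑ a : Fin (s j), f ⟨j, a⟩ := by
  rw [← Finset.sum_sigma]
  rfl

lemma diag_entry (U : Matrix (BlkIdx v s) (BlkIdx v s) ℝ) (τ : ι) (i : BlkIdx v s) :
    (Uᵀ * Dmat s lam τ * U) i i = ∑ j, lam τ j * mcoef U i j := by
  rw [Matrix.mul_assoc]
  rw [Matrix.mul_apply]
  have : ∀ k : BlkIdx v s, Uᵀ i k * (Dmat s lam τ * U) k i = lam τ k.1 * (U k i)^2 := by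
    intro k
    simp [Dmat, Matrix.diagonal_mul, Matrix.transpose_apply]
    ring
  rw [Finset.sum_congr rfl fun k _ => this k, sigma_sum]
  simp [mcoef, Finset.mul_sum]

lemma col_mass (U : Matrix (BlkIdx v s) (BlkIdx v s) ℝ) (hU : Uᵀ * U = 1) (i : BlkIdx v s) :
    ∑ j, mcoef U i j = 1 := by
  have h := congrArg (fun M => M i i) hU
  simp only [Matrix.mul_apply, Matrix.one_apply_eq, Matrix.transpose_apply] at h
  simp only [mcoef]
  rw [← sigma_sum fun k => (U k i)^2, ← h]
  exact Finset.sum_congr rfl fun k _ => (sq (U k i))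

lemma row_mass (U : Matrix (BlkIdx v s) (BlkIdx v s) ℝ) (hU : Uᵀ * U = 1) (j : Fin (v + 1)) :
    ∑ i, mcoef U i j = (s j : ℝ) := by
  have hU' : U * Uᵀ = 1 := by
    rw [mul_eq_one_comm] at hU; exact hU
  have : ∀ a : Fin (s j), ∑ i, (U ⟨j, a⟩ i)^2 = 1 := by
    intro a
    have h := congrArg (fun M => M (⟨j,a⟩ : BlkIdx v s) (⟨j,a⟩ : BlkIdx v s)) hU'
    simp only [Matrix.mul_apply, Matrix.one_apply_eq, Matrix.transpose_apply] at h
    rw [← h]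
    exact Finset.sum_congr rfl fun k _ => (sq _)
  simp only [mcoef]
  rw [Finset.sum_comm]
  simp [this]

end Helpers
section Helpers2
set_option linter.unusedSectionVars false

variable {v : ℕ} {s : Fin (v + 1) → ℕ} {ι : Type*} [Fintype ι]
  (lam : ι → Fin (v + 1) → ℝ)

lemma variance_decomp (m l : Fin (v + 1) → ℝ) (hm : ∑ j, m j = 1) :
    ∑ j, m j * (l j) ^ 2 = (∑ j, l j * m j) ^ 2 + ∑ j, m j * (l j - ∑ j', l j' * m j') ^ 2 := by
  set c := ∑ j', l j' * m j' with hc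
  have : ∀ j, m j * (l j - c) ^ 2 = m j * (l j)^2 - 2 * c * (l j * m j) + c^2 * m j := by
    intro j; ring
  rw [Finset.sum_congr rfl fun j _ => this j]
  rw [Finset.sum_add_distrib, Finset.sum_sub_distrib, ← Finset.mul_sum, ← Finset.mul_sum, ← hc,
    hm]
  ring

/-- error term -/
def errT (U : Matrix (BlkIdx v s) (BlkIdx v s) ℝ) : ℝ :=
  ∑ τ : ι, ∑ i : BlkIdx v s, ∑ j,
    mcoef U i j * (lam τ j - ∑ j', lam τ j' * mcoef U i j') ^ 2

lemma errT_nonneg (U : Matrix (BlkIdx v s) (BlkIdx v s) ℝ) : 0 ≤ errT lam U := by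
  refine Finset.sum_nonneg fun τ _ => Finset.sum_nonneg fun i _ => Finset.sum_nonneg fun j _ => ?_
  have : 0 ≤ mcoef U i j := Finset.sum_nonneg fun a _ => sq_nonneg _
  positivity

lemma gMax_eq_full (hlam0 : ∀ τ, lam τ (Fin.last v) = 0) :
    gMax s lam = ∑ τ : ι, ∑ j, (lam τ j) ^ 2 * (s j : ℝ) := by
  unfold gMax
  refine Finset.sum_congr rfl fun τ _ => ?_
  rw [← Finset.sum_erase_add _ _ (Finset.mem_univ (Fin.last v))]
  simp [hlam0 τ]

lemma key_decomp (hlam0 : ∀ τ, lam τ (Fin.last v) = 0)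
    (U : Matrix (BlkIdx v s) (BlkIdx v s) ℝ) (hU : Uᵀ * U = 1) :
    gObj s lam U + errT lam U = gMax s lam := by
  rw [gMax_eq_full lam hlam0]
  unfold gObj errT
  rw [← Finset.sum_add_distrib]
  refine Finset.sum_congr rfl fun τ _ => ?_
  rw [← Finset.sum_add_distrib]
  have step : ∀ i : BlkIdx v s,
      ((Uᵀ * Dmat s lam τ * U) i i) ^ 2 +
        ∑ j, mcoef U i j * (lam τ j - ∑ j', lam τ j' * mcoef U i j') ^ 2
      = ∑ j, mcoef U i j * (lam τ j) ^ 2 := by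
    intro i
    rw [diag_entry lam U τ i]
    exact (variance_decomp (fun j => mcoef U i j) (lam τ) (col_mass U hU i)).symm
  rw [Finset.sum_congr rfl fun i _ => step i, Finset.sum_comm]
  simp only [← Finset.sum_mul]
  refine Finset.sum_congr rfl fun j _ => ?_
  rw [row_mass U hU j]
  ring

end Helpers2
section Helpers3
set_option linter.unusedSectionVars false

variable {v : ℕ} {s : Fin (v + 1) → ℕ} {ι : Type*} [Fintype ι]
  (lam : ι → Fin (v + 1) → ℝ)

lemma gObj_one (hlam0 : ∀ τ, lam τ (Fin.last v) = 0) :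
    gObj s lam (1 : Matrix (BlkIdx v s) (BlkIdx v s) ℝ) = gMax s lam := by
  rw [gMax_eq_full lam hlam0]
  unfold gObj
  refine Finset.sum_congr rfl fun τ _ => ?_
  simp only [Matrix.transpose_one, Matrix.one_mul, Matrix.mul_one]
  have : ∀ i : BlkIdx v s, (Dmat s lam τ i i) ^ 2 = lam τ i.1 ^ 2 := by
    intro i; simp [Dmat]
  rw [Finset.sum_congr rfl fun i _ => this i, sigma_sum (fun i => lam τ i.1 ^ 2)]
  simp [mul_comm]

lemma permMatrix_transpose (σ : Equiv.Perm (BlkIdx v s)) :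
    (σ.permMatrix ℝ)ᵀ = Equiv.Perm.permMatrix ℝ σ.symm := by
  show (σ.toPEquiv.toMatrix)ᵀ = σ.symm.toPEquiv.toMatrix
  rw [Equiv.toPEquiv_symm, PEquiv.toMatrix_symm]

lemma gObj_perm (U : Matrix (BlkIdx v s) (BlkIdx v s) ℝ) (σ : Equiv.Perm (BlkIdx v s)) :
    gObj s lam (U * σ.permMatrix ℝ) = gObj s lam U := by
  unfold gObj
  refine Finset.sum_congr rfl fun τ _ => ?_
  have h1 : (U * σ.permMatrix ℝ)ᵀ * Dmat s lam τ * (U * σ.permMatrix ℝ)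
      = (σ.permMatrix ℝ)ᵀ * (Uᵀ * Dmat s lam τ * U) * σ.permMatrix ℝ := by
    simp only [Matrix.transpose_mul, Matrix.mul_assoc]
  rw [h1, permMatrix_transpose]
  rw [show Equiv.Perm.permMatrix ℝ σ.symm = σ.symm.toPEquiv.toMatrix from rfl,
    show Equiv.Perm.permMatrix ℝ σ = σ.toPEquiv.toMatrix from rfl,
    PEquiv.toMatrix_toPEquiv_mul, PEquiv.mul_toMatrix_toPEquiv]
  simp only [Matrix.submatrix_apply, id_eq]
  exact Equiv.sum_comp σ.symm (fun i => ((Uᵀ * Dmat s lam τ * U) i i) ^ 2)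

end Helpers3
section Helpers4
set_option linter.unusedSectionVars false

variable {v : ℕ} {s : Fin (v + 1) → ℕ} {ι : Type*} [Fintype ι]
  (lam : ι → Fin (v + 1) → ℝ)

lemma mcoef_blk_one (V : Matrix (BlkIdx v s) (BlkIdx v s) ℝ)
    (hblk : ∀ j, (blk V j j)ᵀ * blk V j j = 1) (i : BlkIdx v s) :
    mcoef V i i.1 = 1 := by
  obtain ⟨j, b⟩ := i
  have h := congrArg (fun M => M b b) (hblk j)
  simp only [Matrix.mul_apply, Matrix.one_apply_eq, Matrix.transpose_apply, blk,
    Matrix.of_apply] at h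
  rw [mcoef, ← h]
  exact Finset.sum_congr rfl fun a _ => (sq _)

lemma mcoef_off_zero (V : Matrix (BlkIdx v s) (BlkIdx v s) ℝ)
    (hoff : ∀ a b : BlkIdx v s, a.1 ≠ b.1 → V a b = 0) (i : BlkIdx v s) (j : Fin (v + 1))
    (hj : j ≠ i.1) : mcoef V i j = 0 := by
  rw [mcoef]
  refine Finset.sum_eq_zero fun a _ => ?_
  rw [hoff ⟨j, a⟩ i hj]
  ring

lemma gObj_of_blockstruct (hlam0 : ∀ τ, lam τ (Fin.last v) = 0)
    (V : Matrix (BlkIdx v s) (BlkIdx v s) ℝ)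
    (hoff : ∀ a b : BlkIdx v s, a.1 ≠ b.1 → V a b = 0)
    (hblk : ∀ j, (blk V j j)ᵀ * blk V j j = 1) :
    gObj s lam V = gMax s lam := by
  rw [gMax_eq_full lam hlam0]
  unfold gObj
  refine Finset.sum_congr rfl fun τ _ => ?_
  have hdiag : ∀ i : BlkIdx v s, (Vᵀ * Dmat s lam τ * V) i i = lam τ i.1 := by
    intro i
    rw [diag_entry lam V τ i]
    rw [Finset.sum_eq_single i.1]
    · rw [mcoef_blk_one V hblk i, mul_one]
    · intro j _ hj
      rw [mcoef_off_zero V hoff i j hj, mul_zero]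
    · simp
  rw [Finset.sum_congr rfl fun i _ => congrArg (· ^ 2) (hdiag i),
    sigma_sum (fun i => lam τ i.1 ^ 2)]
  simp [mul_comm]

lemma blk_orth (V : Matrix (BlkIdx v s) (BlkIdx v s) ℝ) (hV : Vᵀ * V = 1)
    (hoff : ∀ a b : BlkIdx v s, a.1 ≠ b.1 → V a b = 0) (j : Fin (v + 1)) :
    (blk V j j)ᵀ * blk V j j = 1 := by
  ext b c
  have h := congrArg (fun M => M (⟨j, b⟩ : BlkIdx v s) (⟨j, c⟩ : BlkIdx v s)) hV
  simp only [Matrix.mul_apply, Matrix.transpose_apply] at h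
  rw [sigma_sum (fun k => V k ⟨j, b⟩ * V k ⟨j, c⟩)] at h
  rw [Finset.sum_eq_single j] at h
  · rw [Matrix.mul_apply]
    simp only [Matrix.transpose_apply, blk, Matrix.of_apply]
    rw [h]
    by_cases hbc : b = c
    · subst hbc; simp [Matrix.one_apply]
    · have : (⟨j, b⟩ : BlkIdx v s) ≠ ⟨j, c⟩ := by simp [hbc]
      simp [Matrix.one_apply, hbc, this]
  · intro k _ hk
    refine Finset.sum_eq_zero fun a _ => ?_
    rw [hoff ⟨k, a⟩ ⟨j, b⟩ hk, zero_mul]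
  · simp

lemma permMatrix_orth (σ : Equiv.Perm (BlkIdx v s)) :
    (σ.permMatrix ℝ)ᵀ * σ.permMatrix ℝ = 1 := by
  rw [permMatrix_transpose]
  show σ.symm.toPEquiv.toMatrix * σ.toPEquiv.toMatrix = 1
  rw [← PEquiv.toMatrix_trans, ← Equiv.toPEquiv_trans]
  simp

lemma mul_permMatrix_apply (U : Matrix (BlkIdx v s) (BlkIdx v s) ℝ)
    (σ : Equiv.Perm (BlkIdx v s)) (a b : BlkIdx v s) :
    (U * σ.permMatrix ℝ) a b = U a (σ.symm b) := by
  have h : U * σ.permMatrix ℝ = U.submatrix id σ.symm := PEquiv.mul_toMatrix_toPEquiv U σ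
  rw [h]
  rfl

end Helpers4

theorem statement10 (v : ℕ) (hv : 1 ≤ v) (s : Fin (v + 1) → ℕ) (hs : ∀ j, 1 ≤ s j)
    {ι : Type*} [Fintype ι] [Nonempty ι]
    (lam : ι → Fin (v + 1) → ℝ) (hlam0 : ∀ τ, lam τ (Fin.last v) = 0)
    (hsig : ∀ k, k ≠ Fin.last v → ∃ τ, lam τ k ≠ 0)
    (hsep : ∀ j k, j ≠ Fin.last v → k ≠ Fin.last v → j ≠ k → ∃ τ, lam τ j ≠ lam τ k)
    (W : Matrix (BlkIdx v s) (BlkIdx v s) ℝ) (hWorth : Wᵀ * W = 1) :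
    (∀ U : Matrix (BlkIdx v s) (BlkIdx v s) ℝ, Uᵀ * U = 1 → gObj s lam U ≤ gObj s lam W) ↔
      ∃ σ : Equiv.Perm (BlkIdx v s),
        (∀ a b : BlkIdx v s, a.1 ≠ b.1 → (W * σ.permMatrix ℝ) a b = 0) ∧
        ∀ j, (blk (W * σ.permMatrix ℝ) j j)ᵀ * blk (W * σ.permMatrix ℝ) j j = 1 := by
  constructor
  · intro hmax
    -- W attains the maximum value gMax, hence errT = 0
    have h1 : gMax s lam ≤ gObj s lam W := by
      rw [← gObj_one lam hlam0]
      exact hmax 1 (by simp)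
    have hkey := key_decomp lam hlam0 W hWorth
    have herr0 : errT lam W = 0 := le_antisymm (by linarith) (errT_nonneg lam W)
    -- pointwise vanishing
    have hz : ∀ τ (i : BlkIdx v s) j, mcoef W i j ≠ 0 →
        lam τ j = ∑ j', lam τ j' * mcoef W i j' := by
      intro τ i j hm
      have h2 : ∀ τ ∈ (Finset.univ : Finset ι), (0:ℝ) ≤ ∑ i : BlkIdx v s, ∑ j,
          mcoef W i j * (lam τ j - ∑ j', lam τ j' * mcoef W i j') ^ 2 := by
        intro τ _
        refine Finset.sum_nonneg fun i _ => Finset.sum_nonneg fun j _ => ?_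
        have : 0 ≤ mcoef W i j := Finset.sum_nonneg fun a _ => sq_nonneg _
        positivity
      have h3 := (Finset.sum_eq_zero_iff_of_nonneg h2).mp herr0 τ (Finset.mem_univ τ)
      have h4 : ∀ i ∈ (Finset.univ : Finset (BlkIdx v s)), (0:ℝ) ≤ ∑ j,
          mcoef W i j * (lam τ j - ∑ j', lam τ j' * mcoef W i j') ^ 2 := by
        intro i _
        refine Finset.sum_nonneg fun j _ => ?_
        have : 0 ≤ mcoef W i j := Finset.sum_nonneg fun a _ => sq_nonneg _
        positivity
      have h5 := (Finset.sum_eq_zero_iff_of_nonneg h4).mp h3 i (Finset.mem_univ i)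
      have h6 : ∀ j ∈ (Finset.univ : Finset (Fin (v+1))), (0:ℝ) ≤
          mcoef W i j * (lam τ j - ∑ j', lam τ j' * mcoef W i j') ^ 2 := by
        intro j _
        have : 0 ≤ mcoef W i j := Finset.sum_nonneg fun a _ => sq_nonneg _
        positivity
      have h7 := (Finset.sum_eq_zero_iff_of_nonneg h6).mp h5 j (Finset.mem_univ j)
      rcases mul_eq_zero.mp h7 with h | h
      · exact absurd h hm
      · have := sq_eq_zero_iff.mp h
        linarith [this]
    -- uniqueness of the supporting block
    have huniq : ∀ (i : BlkIdx v s) j k, mcoef W i j ≠ 0 → mcoef W i k ≠ 0 → j = k := by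
      intro i j k hj hk
      by_contra hjk
      have hl : ∀ τ, lam τ j = lam τ k := fun τ => (hz τ i j hj).trans (hz τ i k hk).symm
      by_cases hj' : j = Fin.last v
      · have hk' : k ≠ Fin.last v := fun h => hjk (hj'.trans h.symm)
        obtain ⟨τ, hτ⟩ := hsig k hk'
        exact hτ ((hl τ).symm.trans (hj' ▸ hlam0 τ))
      · by_cases hk' : k = Fin.last v
        · obtain ⟨τ, hτ⟩ := hsig j hj'
          exact hτ ((hl τ).trans (hk' ▸ hlam0 τ))
        · obtain ⟨τ, hτ⟩ := hsep j k hj' hk' hjk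
          exact hτ (hl τ)
    -- the supporting block function φ
    have hex : ∀ i : BlkIdx v s, ∃ j, mcoef W i j ≠ 0 := by
      intro i
      by_contra h
      push_neg at h
      have := col_mass W hWorth i
      rw [Finset.sum_eq_zero (fun j _ => h j)] at this
      norm_num at this
    set φ : BlkIdx v s → Fin (v + 1) := fun i => (hex i).choose with hφdef
    have hφ : ∀ i, mcoef W i (φ i) ≠ 0 := fun i => (hex i).choose_spec
    have hφ0 : ∀ i j, j ≠ φ i → mcoef W i j = 0 := by
      intro i j h
      by_contra hm
      exact h (huniq i j (φ i) hm (hφ i))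
    have hent : ∀ (k i : BlkIdx v s), k.1 ≠ φ i → W k i = 0 := by
      intro k i h
      have h0 := hφ0 i k.1 h
      rw [mcoef] at h0
      have := (Finset.sum_eq_zero_iff_of_nonneg (fun a _ => sq_nonneg (W ⟨k.1, a⟩ i))).mp h0
        k.2 (Finset.mem_univ _)
      exact sq_eq_zero_iff.mp this
    have hm1 : ∀ i, mcoef W i (φ i) = 1 := by
      intro i
      have := col_mass W hWorth i
      rwa [Finset.sum_eq_single (φ i) (fun j _ hj => hφ0 i j hj) (by simp)] at this
    -- fiber cardinality
    have hcard : ∀ j, Fintype.card {i : BlkIdx v s // φ i = j} = s j := by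
      intro j
      have h1 : (s j : ℝ) = ∑ i : BlkIdx v s, mcoef W i j := (row_mass W hWorth j).symm
      have h2 : ∀ i : BlkIdx v s, mcoef W i j = if φ i = j then 1 else 0 := by
        intro i
        by_cases h : φ i = j
        · rw [if_pos h, ← h, hm1]
        · rw [if_neg h, hφ0 i j (fun hh => h hh.symm)]
      rw [Finset.sum_congr rfl fun i _ => h2 i, Finset.sum_boole] at h1
      rw [Fintype.card_subtype]
      exact_mod_cast h1.symm
    have e : ∀ j, {i : BlkIdx v s // φ i = j} ≃ Fin (s j) :=
      fun j => Fintype.equivFinOfCardEq (hcard j)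
    set ρ : Equiv.Perm (BlkIdx v s) :=
      (Equiv.sigmaCongrRight fun j => (e j).symm).trans (Equiv.sigmaFiberEquiv φ) with hρdef
    have hρ : ∀ b : BlkIdx v s, φ (ρ b) = b.1 := fun b => ((e b.1).symm b.2).2
    refine ⟨ρ.symm, ?_, ?_⟩
    · intro a b hab
      rw [mul_permMatrix_apply, Equiv.symm_symm]
      exact hent a (ρ b) (fun h => hab (h.trans (hρ b)))
    · have hoff : ∀ a b : BlkIdx v s, a.1 ≠ b.1 → (W * (Equiv.Perm.permMatrix ℝ ρ.symm)) a b = 0 := by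
        intro a b hab
        rw [mul_permMatrix_apply, Equiv.symm_symm]
        exact hent a (ρ b) (fun h => hab (h.trans (hρ b)))
      have horth : (W * Equiv.Perm.permMatrix ℝ ρ.symm)ᵀ * (W * Equiv.Perm.permMatrix ℝ ρ.symm) = 1 := by
        rw [Matrix.transpose_mul, Matrix.mul_assoc, ← Matrix.mul_assoc Wᵀ W, hWorth,
          Matrix.one_mul, permMatrix_orth]
      exact blk_orth _ horth hoff
  · rintro ⟨σ, hoff, hblk⟩
    intro U hU
    have hW : gObj s lam W = gMax s lam := by
      rw [← gObj_perm lam W σ]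
      exact gObj_of_blockstruct lam hlam0 _ hoff hblk
    have hkey := key_decomp lam hlam0 U hU
    have := errT_nonneg lam U
    rw [hW]
    linarith
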